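/- Let R be a commutative ring with identity, S a multiplicative subset of R, m a positive integer, and let I_1, …, I_m be ideals of R, each disjoint from S. If for each 1 ≤ i ≤ m the ideal I_i is an S-n_i-absorbing ideal of R (n_i a positive integer), then I_1 ∩ ⋯ ∩ I_m is an S-n-absorbing ideal of R, where n = n_1 + ⋯ + n_m. -/

import Mathlib

/-- `I` is `S`-`n`-absorbing with associated element `s`. -/
def IsSNAbsorbingAssoc {R : Type*} [CommRing R] (s : R) (n : ℕ) (I : Ideal R) : Prop :=
  ∀ r : Fin (n + 1) → R, (∏ i, r i) ∈ I →
    ∃ j : Fin (n + 1), s * ∏ i ∈ Finset.univ.erase j, r i ∈ I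

/-- `I` is an `S`-`n`-absorbing ideal. -/
def IsSNAbsorbing {R : Type*} [CommRing R] (S : Set R) (n : ℕ) (I : Ideal R) : Prop :=
  ∃ s ∈ S, IsSNAbsorbingAssoc s n I

open Finset

lemma assoc_finset {R : Type*} [CommRing R] {s : R} {n : ℕ} {I : Ideal R}
    (h : IsSNAbsorbingAssoc s n I) {ι : Type*} [DecidableEq ι] (A : Finset ι)
    (hA : A.card = n + 1) (r : ι → R) (hr : (∏ i ∈ A, r i) ∈ I) :
    ∃ j ∈ A, s * ∏ i ∈ A.erase j, r i ∈ I := by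
  have e : Fin (n + 1) ≃ A := (A.equivFin.trans (finCongr hA)).symm
  have hprod : (∏ i, r (e i)) = ∏ i ∈ A, r i := by
    rw [← Finset.prod_coe_sort A r]
    exact Fintype.prod_equiv e _ _ (fun i => rfl)
  obtain ⟨j, hj⟩ := h (fun i => r (e i)) (by rwa [hprod])
  refine ⟨(e j : ι), (e j).2, ?_⟩
  have heq : ∏ i ∈ univ.erase j, r (e i) = ∏ i ∈ A.erase (e j : ι), r i := by
    refine Finset.prod_bij (fun i _ => (e i : ι)) ?_ ?_ ?_ ?_
    · intro a ha
      rw [mem_erase] at ha ⊢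
      refine ⟨fun hc => ha.1 (e.injective (Subtype.ext hc)), (e a).2⟩
    · intro a₁ ha₁ a₂ ha₂ hc
      exact e.injective (Subtype.ext hc)
    · intro b hb
      rw [mem_erase] at hb
      refine ⟨e.symm ⟨b, hb.2⟩, ?_, by simp⟩
      rw [mem_erase]
      refine ⟨fun hc => hb.1 ?_, mem_univ _⟩
      have := congrArg (fun x => ((e x : A) : ι)) hc
      simpa using this
    · intro a ha; rfl
  rwa [heq] at hj

lemma drop_lemma {R : Type*} [CommRing R] {s : R} {n : ℕ} {I : Ideal R}
    (h : IsSNAbsorbingAssoc s n I) :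
    ∀ (c : ℕ) {ι : Type*} [DecidableEq ι] (A : Finset ι) (r : ι → R),
      A.card = n + 1 + c → (∏ i ∈ A, r i) ∈ I →
      ∃ T ⊆ A, T.card = n ∧ s ^ (n + 1 + c) * ∏ i ∈ T, r i ∈ I := by
  intro c
  induction c with
  | zero =>
    intro ι _ A r hAc hr
    obtain ⟨j, hjA, hj⟩ := assoc_finset h A hAc r hr
    refine ⟨A.erase j, erase_subset _ _, ?_, ?_⟩
    · rw [card_erase_of_mem hjA, hAc]
      omega
    · have heq : s ^ (n + 1 + 0) * ∏ i ∈ A.erase j, r i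
          = s ^ n * (s * ∏ i ∈ A.erase j, r i) := by ring
      rw [heq]
      exact Ideal.mul_mem_left _ _ hj
  | succ c ih =>
    intro ι _ A r hAc hr
    have h2 : 1 < A.card := by omega
    obtain ⟨a, ha, b, hb, hab⟩ := Finset.one_lt_card.mp h2
    set A' := A.erase b with hA'def
    set r' := Function.update r a (r a * r b) with hr'def
    have haA' : a ∈ A' := mem_erase.mpr ⟨hab, ha⟩
    have hA'c : A'.card = n + 1 + c := by
      rw [hA'def, card_erase_of_mem hb]; omega
    have hupd : ∀ (E : Finset ι), a ∉ E → ∏ i ∈ E, r' i = ∏ i ∈ E, r i := by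
      intro E hE
      exact Finset.prod_update_of_notMem hE r _
    have hprod : ∏ i ∈ A', r' i = ∏ i ∈ A, r i := by
      rw [← Finset.mul_prod_erase A' r' haA', ← Finset.mul_prod_erase A r hb,
        ← Finset.mul_prod_erase A' r haA', hupd _ (notMem_erase a A')]
      simp only [hr'def, Function.update_self]
      ring
    obtain ⟨T, hTA', hTcard, hT⟩ := ih A' r' hA'c (by rwa [hprod])
    by_cases haT : a ∈ T
    · have hbT : b ∉ T := fun hbT => (mem_erase.mp (hTA' hbT)).1 rfl
      set T' := insert b T with hT'def
      have hT'A : T' ⊆ A := insert_subset hb ((hTA'.trans (erase_subset _ _)))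
      have hT'card : T'.card = n + 1 := by
        rw [hT'def, card_insert_of_notMem hbT, hTcard]
      have hprodT : ∏ i ∈ T', r i = ∏ i ∈ T, r' i := by
        rw [hT'def, prod_insert hbT, ← Finset.mul_prod_erase T r' haT,
          ← Finset.mul_prod_erase T r haT, hupd _ (notMem_erase a T)]
        simp only [hr'def, Function.update_self]
        ring
      set q := Function.update r a (s ^ (n + 1 + c) * r a) with hqdef
      have hqupd : ∀ (E : Finset ι), a ∉ E → ∏ i ∈ E, q i = ∏ i ∈ E, r i := by
        intro E hE
        exact Finset.prod_update_of_notMem hE r _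
      have haT' : a ∈ T' := mem_insert_of_mem haT
      have hq : (∏ i ∈ T', q i) ∈ I := by
        have heq : ∏ i ∈ T', q i = s ^ (n + 1 + c) * ∏ i ∈ T', r i := by
          rw [← Finset.mul_prod_erase T' q haT', ← Finset.mul_prod_erase T' r haT',
            hqupd _ (notMem_erase a T')]
          simp only [hqdef, Function.update_self]
          ring
        rw [heq, hprodT]
        exact hT
      obtain ⟨j, hjT', hj⟩ := assoc_finset h T' hT'card q hq
      by_cases hja : j = a
      · subst hja
        refine ⟨T'.erase j, (erase_subset _ _).trans hT'A, ?_, ?_⟩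
        · rw [card_erase_of_mem hjT', hT'card]
          omega
        · rw [hqupd _ (notMem_erase j T')] at hj
          have heq : s ^ (n + 1 + (c + 1)) * ∏ i ∈ T'.erase j, r i
              = s ^ (n + 1 + c) * (s * ∏ i ∈ T'.erase j, r i) := by ring
          rw [heq]
          exact Ideal.mul_mem_left _ _ hj
      · have haTj : a ∈ T'.erase j := mem_erase.mpr ⟨fun hc => hja hc.symm, haT'⟩
        refine ⟨T'.erase j, (erase_subset _ _).trans hT'A, ?_, ?_⟩
        · rw [card_erase_of_mem hjT', hT'card]
          omega
        · have heq : ∏ i ∈ T'.erase j, q i = s ^ (n + 1 + c) * ∏ i ∈ T'.erase j, r i := by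
            rw [← Finset.mul_prod_erase _ q haTj, ← Finset.mul_prod_erase _ r haTj,
              hqupd _ (notMem_erase a _)]
            simp only [hqdef, Function.update_self]
            ring
          rw [heq] at hj
          have heq2 : s ^ (n + 1 + (c + 1)) * ∏ i ∈ T'.erase j, r i
              = s * (s ^ (n + 1 + c) * ∏ i ∈ T'.erase j, r i) := by ring
          rw [heq2]
          exact hj
    · refine ⟨T, hTA'.trans (erase_subset _ _), hTcard, ?_⟩
      rw [hupd T haT] at hT
      have heq : s ^ (n + 1 + (c + 1)) * ∏ i ∈ T, r i
          = s * (s ^ (n + 1 + c) * ∏ i ∈ T, r i) := by ring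
      rw [heq]
      exact Ideal.mul_mem_left _ _ hT

theorem stmt_3 {R : Type*} [CommRing R] (S : Submonoid R) (m : ℕ) (hm : 0 < m)
    (I : Fin m → Ideal R) (N : Fin m → ℕ) (hN : ∀ i, 0 < N i)
    (hd : ∀ i, Disjoint ((I i : Ideal R) : Set R) (S : Set R))
    (hA : ∀ i, IsSNAbsorbing (S : Set R) (N i) (I i)) :
    IsSNAbsorbing (S : Set R) (∑ i, N i) (⨅ i, I i) := by
  classical
  choose t ht hassoc using hA
  set n := ∑ i, N i with hn
  refine ⟨∏ i, t i ^ (n + 1), prod_mem (fun i _ => pow_mem (ht i) _), ?_⟩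
  intro r hr
  have hr' : ∀ i, (∏ k, r k) ∈ I i := fun i => Ideal.mem_iInf.mp hr i
  have hle : ∀ i, N i ≤ n := fun i =>
    Finset.single_le_sum (fun _ _ => Nat.zero_le _) (mem_univ i)
  have key : ∀ i : Fin m, ∃ T ⊆ (univ : Finset (Fin (n + 1))), T.card = N i ∧
      t i ^ (n + 1) * ∏ k ∈ T, r k ∈ I i := by
    intro i
    have hcard : (univ : Finset (Fin (n + 1))).card = N i + 1 + (n - N i) := by
      have := hle i
      simp only [card_univ, Fintype.card_fin]
      omega
    obtain ⟨T, hT, hTc, hTm⟩ := drop_lemma (hassoc i) (n - N i) univ r hcard (hr' i)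
    refine ⟨T, hT, hTc, ?_⟩
    have heq : N i + 1 + (n - N i) = n + 1 := by have := hle i; omega
    rwa [heq] at hTm
  choose T hTsub hTcard hTmem using key
  have hUcard : (univ.biUnion T).card ≤ n := by
    calc (univ.biUnion T).card ≤ ∑ i, (T i).card := Finset.card_biUnion_le
    _ = n := by simp only [hTcard]; exact hn.symm
  have hex : ∃ j : Fin (n + 1), j ∉ univ.biUnion T := by
    by_contra hcon
    push_neg at hcon
    have hsub : (univ : Finset (Fin (n + 1))) ⊆ univ.biUnion T := fun j _ => hcon j
    have hc := Finset.card_le_card hsub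
    rw [card_univ, Fintype.card_fin] at hc
    omega
  obtain ⟨j, hj⟩ := hex
  refine ⟨j, ?_⟩
  rw [Ideal.mem_iInf]
  intro i
  have hjT : j ∉ T i := fun hmem => hj (mem_biUnion.mpr ⟨i, mem_univ i, hmem⟩)
  have hsub : T i ⊆ univ.erase j := subset_erase.mpr ⟨hTsub i, hjT⟩
  have hsplit : ∏ k ∈ univ.erase j, r k
      = (∏ k ∈ (univ.erase j) \ T i, r k) * ∏ k ∈ T i, r k := (prod_sdiff hsub).symm
  have hs : (∏ k, t k ^ (n + 1))
      = t i ^ (n + 1) * ∏ k ∈ univ.erase i, t k ^ (n + 1) :=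
    (Finset.mul_prod_erase univ _ (mem_univ i)).symm
  have heq : (∏ k, t k ^ (n + 1)) * ∏ k ∈ univ.erase j, r k
      = (t i ^ (n + 1) * ∏ k ∈ T i, r k) *
        ((∏ k ∈ univ.erase i, t k ^ (n + 1)) * ∏ k ∈ (univ.erase j) \ T i, r k) := by
    rw [hs, hsplit]; ring
  rw [heq]
  exact Ideal.mul_mem_right _ _ (hTmem i)
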